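/- Let n ≥ 3 and let α = α_i + α_{i+1} = e_i − e_{i+2} be a positive root of height 2 in A_{n−1} (1 ≤ i ≤ n−2). If w ∈ S_n is such that w·(−3α) = w(−3α+ρ) − ρ is dominant, then n = 3, α = α_1 + α_2, w·(−3α) = α_1 + α_2 = (1,0,−1), and ℓ(w) = 3. -/

import Mathlib

/-- ρ = (n−1, n−2, …, 1, 0) for type A_{n−1} realized in ℤ^n. -/
def weylRho (n : ℕ) : Fin n → ℤ := fun i => (n : ℤ) - 1 - (i : ℕ)

/-- The action of `w ∈ S_n` on weights: `w(λ)_i = λ_{w⁻¹(i)}`. -/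
def wAct {n : ℕ} (w : Equiv.Perm (Fin n)) (lam : Fin n → ℤ) : Fin n → ℤ :=
  fun i => lam (w⁻¹ i)

/-- The dot action `w·λ = w(λ+ρ) − ρ`. -/
def dotAct {n : ℕ} (w : Equiv.Perm (Fin n)) (lam : Fin n → ℤ) : Fin n → ℤ :=
  fun i => lam (w⁻¹ i) + weylRho n (w⁻¹ i) - weylRho n i

/-- `λ` is dominant iff `λ_1 ≥ λ_2 ≥ ⋯ ≥ λ_n`. -/
def IsDominant {n : ℕ} (lam : Fin n → ℤ) : Prop :=
  ∀ i j : Fin n, i ≤ j → lam j ≤ lam i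

/-- The root `e_i − e_j`. -/
def posRoot {n : ℕ} (i j : Fin n) : Fin n → ℤ :=
  fun k => (if k = i then 1 else 0) - (if k = j then 1 else 0)

/-- Positive roots of A_{n−1}: `e_i − e_j` with `i < j`. -/
def IsPosRoot {n : ℕ} (x : Fin n → ℤ) : Prop :=
  ∃ i j : Fin n, i < j ∧ x = posRoot i j

/-- Negative roots of A_{n−1}. -/
def IsNegRoot {n : ℕ} (x : Fin n → ℤ) : Prop :=
  ∃ i j : Fin n, i < j ∧ x = -(posRoot i j)

/-- The length ℓ(w): the number of positive roots sent to negative roots by `w`,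
i.e. the number of inversions of `w`. -/
def weylLen {n : ℕ} (w : Equiv.Perm (Fin n)) : ℕ :=
  (Finset.univ.filter (fun p : Fin n × Fin n => p.1 < p.2 ∧ w p.2 < w p.1)).card

lemma fin3_case : ∀ w : Equiv.Perm (Fin 3),
    IsDominant (dotAct w (-(3 • posRoot (0 : Fin 3) (2 : Fin 3)))) →
    dotAct w (-(3 • posRoot (0 : Fin 3) (2 : Fin 3))) = posRoot (0 : Fin 3) (2 : Fin 3) ∧
    weylLen w = 3 := by
  unfold IsDominant dotAct weylLen weylRho posRoot
  decide

theorem dot_neg_three_height_two_root (n : ℕ) (hn : 3 ≤ n) (i : ℕ) (hi : i + 2 < n)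
    (w : Equiv.Perm (Fin n))
    (hdom : IsDominant (dotAct w (-(3 • posRoot (⟨i, by omega⟩ : Fin n) (⟨i + 2, hi⟩ : Fin n))))) :
    n = 3 ∧ i = 0 ∧
    dotAct w (-(3 • posRoot (⟨i, by omega⟩ : Fin n) (⟨i + 2, hi⟩ : Fin n))) =
      posRoot (⟨0, by omega⟩ : Fin n) (⟨2, by omega⟩ : Fin n) ∧
    weylLen w = 3 := by
  have hia : i < n := by omega
  have hlamval : ∀ k : Fin n,
      (-(3 • posRoot (⟨i, hia⟩ : Fin n) (⟨i + 2, hi⟩ : Fin n))) k =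
      -3 * (if k = (⟨i, hia⟩ : Fin n) then 1 else 0) +
        3 * (if k = (⟨i + 2, hi⟩ : Fin n) then 1 else 0) := by
    intro k
    simp only [Pi.neg_apply, Pi.smul_apply, posRoot, smul_eq_mul]
    ring
  have key : ∀ j k : Fin n, j < k →
      (-(3 • posRoot (⟨i, hia⟩ : Fin n) (⟨i + 2, hi⟩ : Fin n))) (w⁻¹ k) + weylRho n (w⁻¹ k) <
      (-(3 • posRoot (⟨i, hia⟩ : Fin n) (⟨i + 2, hi⟩ : Fin n))) (w⁻¹ j) + weylRho n (w⁻¹ j) := by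
    intro j k hjk
    have h := hdom j k (le_of_lt hjk)
    simp only [dotAct] at h
    have hr : weylRho n k < weylRho n j := by
      simp only [weylRho]
      have : (j : ℕ) < (k : ℕ) := hjk
      omega
    omega
  have inj : ∀ p q : Fin n,
      (-(3 • posRoot (⟨i, hia⟩ : Fin n) (⟨i + 2, hi⟩ : Fin n))) p + weylRho n p =
      (-(3 • posRoot (⟨i, hia⟩ : Fin n) (⟨i + 2, hi⟩ : Fin n))) q + weylRho n q → p = q := by
    intro p q h
    by_contra hpq
    have hwpq : w p ≠ w q := fun he => hpq (w.injective he)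
    rcases lt_or_gt_of_ne hwpq with h1 | h1
    · have h2 := key (w p) (w q) h1
      simp only [Equiv.Perm.inv_def, Equiv.symm_apply_apply] at h2
      omega
    · have h2 := key (w q) (w p) h1
      simp only [Equiv.Perm.inv_def, Equiv.symm_apply_apply] at h2
      omega
  have hi0 : i = 0 := by
    by_contra h0
    have hi1 : 1 ≤ i := by omega
    have hc : (⟨i - 1, by omega⟩ : Fin n) = (⟨i + 2, hi⟩ : Fin n) := by
      apply inj
      rw [hlamval, hlamval]
      have h1 : (⟨i - 1, by omega⟩ : Fin n) ≠ (⟨i, hia⟩ : Fin n) := by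
        simp only [ne_eq, Fin.mk.injEq]; omega
      have h2 : (⟨i - 1, by omega⟩ : Fin n) ≠ (⟨i + 2, hi⟩ : Fin n) := by
        simp only [ne_eq, Fin.mk.injEq]; omega
      have h3 : (⟨i + 2, hi⟩ : Fin n) ≠ (⟨i, hia⟩ : Fin n) := by
        simp only [ne_eq, Fin.mk.injEq]; omega
      rw [if_neg h1, if_neg h2, if_neg h3, if_pos rfl]
      simp only [weylRho]
      omega
    simp only [Fin.mk.injEq] at hc
    omega
  subst hi0
  have hn3 : n = 3 := by
    by_contra h0
    have h4 : 3 < n := by omega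
    have hc : (⟨3, h4⟩ : Fin n) = (⟨0, hia⟩ : Fin n) := by
      apply inj
      rw [hlamval, hlamval]
      have h1 : (⟨3, h4⟩ : Fin n) ≠ (⟨0, hia⟩ : Fin n) := by
        simp only [ne_eq, Fin.mk.injEq]; omega
      have h2 : (⟨3, h4⟩ : Fin n) ≠ (⟨0 + 2, hi⟩ : Fin n) := by
        simp only [ne_eq, Fin.mk.injEq]; omega
      have h3 : (⟨0, hia⟩ : Fin n) ≠ (⟨0 + 2, hi⟩ : Fin n) := by
        simp only [ne_eq, Fin.mk.injEq]; omega
      rw [if_neg h1, if_neg h2, if_pos rfl, if_neg h3]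
      simp only [weylRho]
      omega
    simp only [Fin.mk.injEq] at hc
    omega
  subst hn3
  refine ⟨rfl, rfl, ?_, ?_⟩
  · exact (fin3_case w hdom).1
  · exact (fin3_case w hdom).2
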